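/- arXiv:1111.7095 — 4 statements merged into one kernel-verified Lean document; each statement's English description precedes it below -/
import Mathlib

section
/- Let R = ℤ[x₁,…,x_N, x₁⁻¹,…,x_N⁻¹, t, t⁻¹] and let k₁,…,k_N be natural numbers. Define V = ∑_{α=1}^N x_α ∑_{i=1}^{k_α} t^{1-i}, V* = ∑_{β=1}^N x_β⁻¹ ∑_{i=1}^{k_β} t^{i-1}, W = ∑_{α=1}^N x_α, W* = ∑_{β=1}^N x_β⁻¹. Then V*·V·(t−1) + W*·V = ∑_{α=1}^N ∑_{β=1}^N x_α x_β⁻¹ ∑_{i=1}^{k_α} t^{k_β+1−i}. -/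
open Finset

/-- The monomial `x^v t^m` in the Laurent polynomial ring
`ℤ[x₁^{±1},…,x_N^{±1}, t^{±1}]`, realized as the group algebra of `(Fin N →₀ ℤ) × ℤ`. -/
noncomputable def mono (N : ℕ) (v : Fin N →₀ ℤ) (m : ℤ) :
    AddMonoidAlgebra ℤ ((Fin N →₀ ℤ) × ℤ) :=
  AddMonoidAlgebra.single (v, m) 1

lemma mono_mul (N : ℕ) (v w : Fin N →₀ ℤ) (m n : ℤ) :
    mono N v m * mono N w n = mono N (v + w) (m + n) := by
  simp [mono, AddMonoidAlgebra.single_mul_single, Prod.mk_add_mk]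

lemma mono_zero_zero (N : ℕ) : mono N 0 0 = 1 := by
  simp [mono, AddMonoidAlgebra.one_def]
  rfl

lemma telescope (N : ℕ) (v : Fin N →₀ ℤ) (b : ℕ) :
    (∑ j ∈ Finset.range b, mono N v (j : ℤ)) * (mono N 0 1 - 1) + mono N v 0 =
      mono N v (b : ℤ) := by
  rw [Finset.sum_mul]
  have h : ∀ j ∈ Finset.range b,
      mono N v (j : ℤ) * (mono N 0 1 - 1) =
        mono N v ((j + 1 : ℕ) : ℤ) - mono N v (j : ℤ) := by
    intro j _
    rw [mul_sub, mul_one, mono_mul]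
    push_cast
    ring_nf
    abel
  rw [Finset.sum_congr rfl h, Finset.sum_range_sub (fun j => mono N v (j : ℤ))]
  simp

/-- Nonabelian vortex character identity:
`V* · V · (t − 1) + W* · V = ∑_{α,β} x_α x_β⁻¹ ∑_{i=1}^{k_α} t^{k_β + 1 − i}`, where
`V = ∑_α x_α ∑_{i=1}^{k_α} t^{1-i}`, `V* = ∑_β x_β⁻¹ ∑_{i=1}^{k_β} t^{i-1}`,
`W = ∑_α x_α`, `W* = ∑_β x_β⁻¹`. -/
theorem nonabelian_vortex_character_identity (N : ℕ) (k : Fin N → ℕ) :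
    (∑ β : Fin N, ∑ i ∈ Finset.range (k β), mono N (Finsupp.single β (-1)) (i : ℤ)) *
        (∑ α : Fin N, ∑ i ∈ Finset.range (k α), mono N (Finsupp.single α 1) (-(i : ℤ))) *
        (mono N 0 1 - 1) +
      (∑ β : Fin N, mono N (Finsupp.single β (-1)) 0) *
        (∑ α : Fin N, ∑ i ∈ Finset.range (k α), mono N (Finsupp.single α 1) (-(i : ℤ))) =
    ∑ α : Fin N, ∑ β : Fin N, ∑ i ∈ Finset.range (k α),
      mono N (Finsupp.single α 1 + Finsupp.single β (-1)) ((k β : ℤ) - (i : ℤ)) := by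
  set T := ∑ α : Fin N, ∑ i ∈ Finset.range (k α), mono N (Finsupp.single α 1) (-(i : ℤ))
    with hT
  have key : (∑ β : Fin N, ∑ i ∈ Finset.range (k β), mono N (Finsupp.single β (-1)) (i : ℤ)) *
        T * (mono N 0 1 - 1) +
      (∑ β : Fin N, mono N (Finsupp.single β (-1)) 0) * T =
      ∑ β : Fin N, mono N (Finsupp.single β (-1)) ((k β : ℤ)) * T := by
    have h1 : (∑ β : Fin N, ∑ i ∈ Finset.range (k β), mono N (Finsupp.single β (-1)) (i : ℤ)) *
        (mono N 0 1 - 1) + ∑ β : Fin N, mono N (Finsupp.single β (-1)) 0 =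
        ∑ β : Fin N, mono N (Finsupp.single β (-1)) ((k β : ℤ)) := by
      rw [Finset.sum_mul, ← Finset.sum_add_distrib]
      exact Finset.sum_congr rfl fun β _ => telescope N (Finsupp.single β (-1)) (k β)
    calc _ = ((∑ β : Fin N, ∑ i ∈ Finset.range (k β), mono N (Finsupp.single β (-1)) (i : ℤ)) *
        (mono N 0 1 - 1) + ∑ β : Fin N, mono N (Finsupp.single β (-1)) 0) * T := by ring
      _ = _ := by rw [h1, Finset.sum_mul]
  rw [key]
  rw [Finset.sum_comm]
  refine Finset.sum_congr rfl fun β _ => ?_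
  rw [hT, Finset.mul_sum]
  refine Finset.sum_congr rfl fun α _ => ?_
  rw [Finset.mul_sum]
  refine Finset.sum_congr rfl fun i _ => ?_
  rw [mono_mul, add_comm (Finsupp.single β (-1 : ℤ))]
  ring_nf
end

section
/- Let λ and μ be two distinct partitions (Young diagrams). Then there exists a cell s ∈ λ with a_λ(s) + l_μ(s) + 1 = 0, or a cell t ∈ μ with a_μ(t) + l_λ(t) + 1 = 0. Here for a cell s = (i,j) (row i, column j), a_λ(s) = λ_i − j is the arm length with respect to λ and l_μ(s) = μ'_j − i is the leg length with respect to μ (where μ' is the conjugate partition); these quantities may be negative when s ∉ μ or s ∉ λ. -/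
open Finset

/-- The conjugate partition: `conj μ j` is the number of rows `i` (0-indexed) with
`μ i > j`, i.e. the length of the `j`-th column of `μ`. -/
noncomputable def conj (μ : ℕ → ℕ) (j : ℕ) : ℕ := Nat.card {i : ℕ // j < μ i}

/-- A downward-closed predicate on `ℕ` that fails somewhere is an initial segment. -/
lemma initSeg {P : ℕ → Prop} (hdc : ∀ {a b : ℕ}, a ≤ b → P b → P a)
    (hN : ∃ N, ¬ P N) : ∃ c, ∀ i, P i ↔ i < c := by
  classical
  refine ⟨Nat.find hN, fun i => ?_⟩
  constructor
  · intro hi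
    by_contra h
    push_neg at h
    exact Nat.find_spec hN (hdc h hi)
  · intro hi
    have := Nat.find_min hN hi
    tauto

lemma cardHelper {P : ℕ → Prop} {c : ℕ} (h : ∀ i, P i ↔ i < c) :
    Nat.card {i : ℕ // P i} = c := by
  have e : {i : ℕ // P i} ≃ Fin c :=
    (Equiv.subtypeEquivRight h).trans (Fin.equivSubtype).symm
  simp [Nat.card_congr e]

lemma ncard_Iio_nat (c : ℕ) : (Set.Iio c).ncard = c := by
  simpa [← Set.ncard_coe_finset] using Nat.card_Iio c

/-- Key lemma: if `x` is a beta-number of `lam` but not of `mu`, and above `x` the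
beta-number sets of `lam` and `mu` agree, then there is a vanishing hook cell in `lam`. -/
lemma key (lam mu : ℕ → ℕ) (hlam : Antitone lam) (hmu : Antitone mu)
    (hlam0 : ∃ n, lam n = 0) (hmu0 : ∃ n, mu n = 0)
    (x : ℤ) (hxl : ∃ i, (lam i : ℤ) - i = x) (hxm : ¬ ∃ i, (mu i : ℤ) - i = x)
    (hmax : ∀ t : ℤ, x < t →
      ((∃ i, (lam i : ℤ) - i = t) ↔ (∃ i, (mu i : ℤ) - i = t))) :
    ∃ i j : ℕ, j < lam i ∧
      ((lam i : ℤ) - j - 1) + ((conj mu j : ℤ) - i - 1) + 1 = 0 := by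
  classical
  -- strictly decreasing beta sequences
  have hβl : ∀ {a b : ℕ}, a < b → (lam b : ℤ) - b < (lam a : ℤ) - a := by
    intro a b hab
    have := hlam hab.le
    omega
  have hβm : ∀ {a b : ℕ}, a < b → (mu b : ℤ) - b < (mu a : ℤ) - a := by
    intro a b hab
    have := hmu hab.le
    omega
  -- initial segments of rows with beta above x
  have hIl : ∃ c, ∀ r : ℕ, (x < (lam r : ℤ) - r) ↔ r < c := by
    refine initSeg (fun {a b} hab h => ?_) ?_
    · have := hlam hab
      omega
    · obtain ⟨N0, hN0⟩ := hlam0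
      refine ⟨N0 + x.natAbs, ?_⟩
      have h1 : lam (N0 + x.natAbs) = 0 := Nat.le_zero.mp (hN0 ▸ hlam (Nat.le_add_right _ _))
      rw [h1]
      omega
  have hIm : ∃ c, ∀ r : ℕ, (x < (mu r : ℤ) - r) ↔ r < c := by
    refine initSeg (fun {a b} hab h => ?_) ?_
    · have := hmu hab
      omega
    · obtain ⟨N0, hN0⟩ := hmu0
      refine ⟨N0 + x.natAbs, ?_⟩
      have h1 : mu (N0 + x.natAbs) = 0 := Nat.le_zero.mp (hN0 ▸ hmu (Nat.le_add_right _ _))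
      rw [h1]
      omega
  obtain ⟨i, hi⟩ := hIl
  obtain ⟨c, hc⟩ := hIm
  -- x is the beta number of row i of lam
  have hxi : (lam i : ℤ) - i = x := by
    obtain ⟨r, hr⟩ := hxl
    have h1 : ¬ r < i := by
      rw [← hi]
      omega
    have h2 : ¬ (x < (lam i : ℤ) - i) := by
      rw [hi]
      omega
    rcases Nat.lt_or_ge i r with h | h
    · have := hβl h
      omega
    · have h3 : r = i := le_antisymm h (not_lt.mp h1)
      rw [h3] at hr
      omega
  -- mu's beta at row c is at most x - 1
  have hmc : (mu c : ℤ) - c ≤ x - 1 := by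
    have h1 : ¬ (x < (mu c : ℤ) - c) := by
      rw [hc]
      omega
    have h2 : (mu c : ℤ) - c ≠ x := fun h => hxm ⟨c, h⟩
    omega
  -- i = c via cardinality of the beta sets above x
  have hic : i = c := by
    have hinjl : Function.Injective (fun r : ℕ => (lam r : ℤ) - r) := by
      intro a b hab
      rcases Nat.lt_trichotomy a b with h | h | h
      · exact absurd hab (by have := hβl h; simp only at *; omega)
      · exact h
      · exact absurd hab (by have := hβl h; simp only at *; omega)
    have hinjm : Function.Injective (fun r : ℕ => (mu r : ℤ) - r) := by
      intro a b hab
      rcases Nat.lt_trichotomy a b with h | h | h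
      · exact absurd hab (by have := hβm h; simp only at *; omega)
      · exact h
      · exact absurd hab (by have := hβm h; simp only at *; omega)
    have hset : (fun r : ℕ => (lam r : ℤ) - r) '' Set.Iio i
        = (fun r : ℕ => (mu r : ℤ) - r) '' Set.Iio c := by
      ext s
      simp only [Set.mem_image, Set.mem_Iio]
      constructor
      · rintro ⟨r, hr, rfl⟩
        have hgt : x < (lam r : ℤ) - r := (hi r).mpr hr
        obtain ⟨r', hr'⟩ := (hmax _ hgt).mp ⟨r, rfl⟩
        exact ⟨r', (hc r').mp (by omega), hr'⟩
      · rintro ⟨r, hr, rfl⟩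
        have hgt : x < (mu r : ℤ) - r := (hc r).mpr hr
        obtain ⟨r', hr'⟩ := (hmax _ hgt).mpr ⟨r, rfl⟩
        exact ⟨r', (hi r').mp (by omega), hr'⟩
    have h1 := Set.ncard_image_of_injective (Set.Iio i) hinjl
    have h2 := Set.ncard_image_of_injective (Set.Iio c) hinjm
    rw [hset] at h1
    rw [ncard_Iio_nat] at h1 h2
    omega
  -- define the column j
  have hj0 : 0 ≤ x + c - 1 := by
    have : (0 : ℤ) ≤ mu c := Int.ofNat_nonneg _
    omega
  set j : ℕ := (x + c - 1).toNat with hjdef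
  have hjval : (j : ℤ) = x + c - 1 := Int.toNat_of_nonneg hj0
  -- conj mu j = c
  have hch : ∀ r : ℕ, j < mu r ↔ r < c := by
    intro r
    constructor
    · intro h
      by_contra hrc
      push_neg at hrc
      have h1 : mu r ≤ mu c := hmu hrc
      omega
    · intro h
      have hc1 : 0 < c := Nat.pos_of_ne_zero (by omega)
      have h1 : x < (mu (c - 1) : ℤ) - ((c - 1 : ℕ) : ℤ) :=
        (hc (c - 1)).mpr (by omega)
      have h2 : mu (c - 1) ≤ mu r := hmu (by omega)
      have h3 : ((c - 1 : ℕ) : ℤ) = (c : ℤ) - 1 := by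
        omega
      rw [h3] at h1
      omega
  have hconj : conj mu j = c := cardHelper hch
  refine ⟨i, j, ?_, ?_⟩
  · omega
  · rw [hconj]
    omega

/-- Combinatorial vanishing lemma: for two distinct partitions `λ ≠ μ` (presented
0-indexed, as antitone eventually-zero sequences of row lengths), there is a cell
`s ∈ λ` with `a_λ(s) + l_μ(s) + 1 = 0` or a cell `t ∈ μ` with `a_μ(t) + l_λ(t) + 1 = 0`,
where for a (0-indexed) cell `(i,j)` the arm is `λ_i − j − 1` and the leg is
`μ'_j − i − 1` (possibly negative). -/
theorem exists_vanishing_hook (lam mu : ℕ → ℕ)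
    (hlam : Antitone lam) (hmu : Antitone mu)
    (hlam0 : ∃ n, lam n = 0) (hmu0 : ∃ n, mu n = 0) (hne : lam ≠ mu) :
    (∃ i j : ℕ, j < lam i ∧
        ((lam i : ℤ) - j - 1) + ((conj mu j : ℤ) - i - 1) + 1 = 0) ∨
    (∃ i j : ℕ, j < mu i ∧
        ((mu i : ℤ) - j - 1) + ((conj lam j : ℤ) - i - 1) + 1 = 0) := by
  classical
  obtain ⟨n1, hn1⟩ := hlam0
  obtain ⟨n2, hn2⟩ := hmu0
  set N : ℕ := max n1 n2 with hN
  have hlamN : ∀ n, N ≤ n → lam n = 0 := fun n hn =>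
    Nat.le_zero.mp (hn1 ▸ hlam (le_trans (le_max_left _ _) hn))
  have hmuN : ∀ n, N ≤ n → mu n = 0 := fun n hn =>
    Nat.le_zero.mp (hn2 ▸ hmu (le_trans (le_max_right _ _) hn))
  -- the symmetric difference of beta-sets is nonempty
  have hD : ∃ x : ℤ, ¬ ((∃ i, (lam i : ℤ) - i = x) ↔ (∃ i, (mu i : ℤ) - i = x)) := by
    by_contra h
    push_neg at h
    apply hne
    funext i
    induction i using Nat.strong_induction_on with
    | _ i ih =>
      have hβl : ∀ {a b : ℕ}, a < b → (lam b : ℤ) - b < (lam a : ℤ) - a := by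
        intro a b hab
        have := hlam hab.le
        omega
      have hβm : ∀ {a b : ℕ}, a < b → (mu b : ℤ) - b < (mu a : ℤ) - a := by
        intro a b hab
        have := hmu hab.le
        omega
      have h1 : (mu i : ℤ) - i ≤ (lam i : ℤ) - i → lam i = mu i → lam i = mu i := fun _ h => h
      -- show (lam i : ℤ) - i ≤ (mu i : ℤ) - i
      have hle1 : (lam i : ℤ) - i ≤ (mu i : ℤ) - i := by
        obtain ⟨r, hr⟩ := (h ((lam i : ℤ) - i)).mp ⟨i, rfl⟩
        rcases Nat.lt_or_ge r i with hri | hri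
        · have h2 : (mu r : ℤ) - r = (lam r : ℤ) - r := by rw [ih r hri]
          have := hβl hri
          omega
        · rcases Nat.eq_or_lt_of_le hri with h2 | h2
          · rw [← h2] at hr
            omega
          · have := hβm h2
            omega
      have hle2 : (mu i : ℤ) - i ≤ (lam i : ℤ) - i := by
        obtain ⟨r, hr⟩ := (h ((mu i : ℤ) - i)).mpr ⟨i, rfl⟩
        rcases Nat.lt_or_ge r i with hri | hri
        · have h2 : (lam r : ℤ) - r = (mu r : ℤ) - r := by rw [ih r hri]
          have := hβm hri
          omega
        · rcases Nat.eq_or_lt_of_le hri with h2 | h2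
          · rw [← h2] at hr
            omega
          · have := hβl h2
            omega
      omega
  -- bound the symmetric difference
  have hsub : ∀ x : ℤ, ¬ ((∃ i, (lam i : ℤ) - i = x) ↔ (∃ i, (mu i : ℤ) - i = x)) →
      x ∈ Finset.Icc (-(N : ℤ)) (max (lam 0) (mu 0) : ℕ) := by
    intro x hx
    rw [Finset.mem_Icc]
    constructor
    · by_contra h
      push_neg at h
      have hxneg : x < 0 := by
        have : (0 : ℤ) ≤ N := Int.ofNat_nonneg _
        omega
      have hNle : N ≤ (-x).toNat := by omega
      have hcast : ((-x).toNat : ℤ) = -x := Int.toNat_of_nonneg (by omega)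
      apply hx
      constructor
      · intro _
        refine ⟨(-x).toNat, ?_⟩
        rw [hmuN _ hNle]
        omega
      · intro _
        refine ⟨(-x).toNat, ?_⟩
        rw [hlamN _ hNle]
        omega
    · by_contra h
      push_neg at h
      apply hx
      constructor
      · rintro ⟨r, hr⟩
        have h2 : lam r ≤ lam 0 := hlam (Nat.zero_le r)
        have h3 : (lam 0 : ℤ) ≤ (max (lam 0) (mu 0) : ℕ) := by
          exact_mod_cast Nat.cast_le.mpr (le_max_left _ _)
        omega
      · rintro ⟨r, hr⟩
        have h2 : mu r ≤ mu 0 := hmu (Nat.zero_le r)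
        have h3 : (mu 0 : ℤ) ≤ (max (lam 0) (mu 0) : ℕ) := by
          exact_mod_cast Nat.cast_le.mpr (le_max_right _ _)
        omega
  -- take the maximum of the symmetric difference
  set F : Finset ℤ := (Finset.Icc (-(N : ℤ)) (max (lam 0) (mu 0) : ℕ)).filter
    (fun x => ¬ ((∃ i, (lam i : ℤ) - i = x) ↔ (∃ i, (mu i : ℤ) - i = x))) with hF
  have hFmem : ∀ x : ℤ,
      ¬ ((∃ i, (lam i : ℤ) - i = x) ↔ (∃ i, (mu i : ℤ) - i = x)) → x ∈ F := by
    intro x hx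
    rw [hF, Finset.mem_filter]
    exact ⟨hsub x hx, hx⟩
  obtain ⟨x0, hx0⟩ := hD
  have hFne : F.Nonempty := ⟨x0, hFmem x0 hx0⟩
  obtain ⟨x, hxF, hxle⟩ : ∃ x, x ∈ F ∧ ∀ y ∈ F, y ≤ x :=
    ⟨F.max' hFne, F.max'_mem hFne, fun y hy => F.le_max' y hy⟩
  have hxprop : ¬ ((∃ i, (lam i : ℤ) - i = x) ↔ (∃ i, (mu i : ℤ) - i = x)) :=
    (Finset.mem_filter.mp hxF).2
  have hmax : ∀ t : ℤ, x < t →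
      ((∃ i, (lam i : ℤ) - i = t) ↔ (∃ i, (mu i : ℤ) - i = t)) := by
    intro t ht
    by_contra h
    exact absurd (hxle t (hFmem t h)) (by omega)
  by_cases hA : ∃ i, (lam i : ℤ) - i = x
  · have hB : ¬ ∃ i, (mu i : ℤ) - i = x := fun h => hxprop (iff_of_true hA h)
    exact Or.inl (key lam mu hlam hmu ⟨n1, hn1⟩ ⟨n2, hn2⟩ x hA hB hmax)
  · have hB : ∃ i, (mu i : ℤ) - i = x := by
      by_contra hB
      exact hxprop (iff_of_false hA hB)
    exact Or.inr (key mu lam hmu hlam ⟨n2, hn2⟩ ⟨n1, hn1⟩ x hB hA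
      (fun t ht => (hmax t ht).symm))
end

section
/- Let F be a field of characteristic zero, m, h, z formal parameters with h invertible, and define for μ ∈ F the formal power series (1−z²)^{−μ} := ∑_{l≥0} (μ)_l z^{2l}/l!, where (μ)_l = μ(μ+1)⋯(μ+l−1). Then in F[[z]]: ∑_{k≥0} z^k · (∏_{i=1}^{⌈k/2⌉}(m + 2h(i−1))) / ((2h)^{⌊k/2⌋}·⌊k/2⌋!) = (1−z²)^{−m/(2h)} + m·z·(1−z²)^{−m/(2h)−1}. -/
open Finset PowerSeries

noncomputable def negBinomSq (F : Type*) [Field F] (μ : F) : PowerSeries F :=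
  PowerSeries.mk fun n =>
    if 2 ∣ n then ((ascPochhammer F (n / 2)).eval μ) / (Nat.factorial (n / 2) : F) else 0

/-- The abelian vortex partition function on ℂ/ℤ₂ (sector `q_α − q_f = 0`):
`∑_{k≥0} z^k ∏_{i=1}^{⌈k/2⌉}(m+2h(i−1)) / ((2h)^{⌊k/2⌋} ⌊k/2⌋!)
  = (1−z²)^{−m/(2h)} + m z (1−z²)^{−m/(2h)−1}`. -/
theorem abelian_orbifold_vortex (F : Type*) [Field F] [CharZero F] (m h : F) (hh : h ≠ 0) :
    (PowerSeries.mk fun k =>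
        (∏ i ∈ Finset.range ((k + 1) / 2), (m + 2 * h * (i : F))) /
          ((2 * h) ^ (k / 2) * (Nat.factorial (k / 2) : F))) =
      negBinomSq F (m / (2 * h)) +
        PowerSeries.C m * PowerSeries.X * negBinomSq F (m / (2 * h) + 1) := by
  have h2 : (2 * h : F) ≠ 0 := mul_ne_zero two_ne_zero hh
  have evalprod : ∀ (l : ℕ) (x : F), (ascPochhammer F l).eval x = ∏ i ∈ range l, (x + i) := by
    intro l x
    induction l with
    | zero => simp
    | succ n ih => rw [ascPochhammer_succ_eval, ih, Finset.prod_range_succ]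
  have key : ∀ l : ℕ, ∏ i ∈ Finset.range l, (m + 2 * h * (i : F))
      = (2 * h) ^ l * (ascPochhammer F l).eval (m / (2 * h)) := by
    intro l
    have step : ∏ i ∈ Finset.range l, (m + 2 * h * (i : F))
        = ∏ i ∈ Finset.range l, (2 * h) * (m / (2 * h) + (i : F)) :=
      Finset.prod_congr rfl fun i _ => by field_simp
    rw [step, Finset.prod_mul_distrib, Finset.prod_const, Finset.card_range, evalprod]
  ext n
  rw [map_add, PowerSeries.coeff_mk, mul_assoc, PowerSeries.coeff_C_mul]
  rcases Nat.even_or_odd n with ⟨l, hl⟩ | ⟨l, hl⟩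
  · have hn : n = 2 * l := by omega
    subst hn
    have hX : (PowerSeries.coeff (2 * l)) (PowerSeries.X * negBinomSq F (m / (2 * h) + 1)) = 0 := by
      rcases l with _ | l
      · simp [PowerSeries.coeff_zero_eq_constantCoeff]
      · have : 2 * (l + 1) = (2 * l + 1) + 1 := by ring
        rw [this, PowerSeries.coeff_succ_X_mul]
        simp [negBinomSq]
    rw [hX, mul_zero, add_zero]
    simp only [negBinomSq, PowerSeries.coeff_mk, if_pos (dvd_mul_right 2 l)]
    have h1 : (2 * l + 1) / 2 = l := by omega
    have h22 : 2 * l / 2 = l := by omega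
    rw [h1, h22, key l]
    have hf : (Nat.factorial l : F) ≠ 0 := Nat.cast_ne_zero.2 (Nat.factorial_ne_zero l)
    field_simp
  · have hn : n = 2 * l + 1 := by omega
    subst hn
    have hX : (PowerSeries.coeff (2 * l + 1)) (negBinomSq F (m / (2 * h))) = 0 := by
      simp [negBinomSq]
    rw [hX, PowerSeries.coeff_succ_X_mul, zero_add]
    simp only [negBinomSq, PowerSeries.coeff_mk, if_pos (dvd_mul_right 2 l)]
    have h1 : (2 * l + 1 + 1) / 2 = l + 1 := by omega
    have h22 : (2 * l + 1) / 2 = l := by omega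
    have h3 : (2 * l) / 2 = l := by omega
    rw [h1, h22, h3, key (l + 1)]
    have hpoch : (ascPochhammer F (l+1)).eval (m / (2*h))
        = (m / (2*h)) * (ascPochhammer F l).eval (m / (2*h) + 1) := by
      rw [evalprod, evalprod, Finset.prod_range_succ']
      simp only [Nat.cast_zero, add_zero]
      rw [mul_comm]
      congr 1
      exact Finset.prod_congr rfl fun i _ => by push_cast; ring
    rw [hpoch]
    have hf : (Nat.factorial l : F) ≠ 0 := Nat.cast_ne_zero.2 (Nat.factorial_ne_zero l)
    field_simp
    ring
end

section
/- Let a, h, m_{1,1}, m_{1,2}, m_{2,1}, m_{2,2} lie in a field of characteristic 0 with 2a ≠ 0, h ≠ 0 and a/h ∉ ℤ. For nonnegative integers l₁, l₂ define Z(l₁,l₂) := ((2a + 2h(l₂−l₁))/(2a)) · (−1)^{l₁+l₂} · (∏_{i=1}^{l₁}(m_{1,1}+2h(i−1))(m_{1,2}+2h(i−1)))/(∏_{i=1}^{l₁}(−2a+2hi)(2hi)) · (∏_{i=1}^{l₂}(m_{2,1}+2h(i−1))(m_{2,2}+2h(i−1)))/(∏_{i=1}^{l₂}(2a+2hi)(2hi)).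 Then in the formal power series ring in z₁, z₂: ∑_{l₁,l₂≥0} Z(l₁,l₂) z₁^{2l₁} z₂^{2l₂} = (1 + (h/(2a))(z₂∂_{z₂} − z₁∂_{z₁})) [ F(m_{1,1}/(2h), m_{1,2}/(2h); 1 − a/h; −z₁²) · F(m_{2,1}/(2h), m_{2,2}/(2h); 1 + a/h; −z₂²) ], where F is the formal Gauss hypergeometric series and ∂_{z} is formal differentiation. -/
open Finset

/-- Coefficients of the formal Gauss hypergeometric series
`F(A,B;C;w) = ∑_l (A)_l (B)_l / ((C)_l l!) wˡ`. -/
noncomputable def hypCoeff (F : Type*) [Field F] (A B C : F) (l : ℕ) : F :=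
  ((ascPochhammer F l).eval A * (ascPochhammer F l).eval B) /
    ((ascPochhammer F l).eval C * (Nat.factorial l : F))

/-- The single-variable formal power series `F(A,B;C;−z²)` viewed inside the
two-variable formal power series ring, in the variable `v ∈ Fin 2`. -/
noncomputable def hypSq (F : Type*) [Field F] (A B C : F) (v : Fin 2) :
    MvPowerSeries (Fin 2) F :=
  fun e => if e (1 - v) = 0 ∧ 2 ∣ e v then (-1 : F) ^ (e v / 2) * hypCoeff F A B C (e v / 2)
    else 0

/-- The Euler operator `z_v ∂_{z_v}` on two-variable formal power series. -/
noncomputable def eulerOp (F : Type*) [Field F] (v : Fin 2) (G : MvPowerSeries (Fin 2) F) :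
    MvPowerSeries (Fin 2) F :=
  fun e => (e v : F) * G e

lemma asc_eval_prod {F : Type*} [Field F] (x : F) (l : ℕ) :
    (ascPochhammer F l).eval x = ∏ i ∈ range l, (x + i) := by
  induction l with
  | zero => simp
  | succ n ih => rw [ascPochhammer_succ_eval, ih, prod_range_succ]

lemma prod_Icc_one {M : Type*} [CommMonoid M] (f : ℕ → M) (l : ℕ) :
    ∏ i ∈ Icc 1 l, f i = ∏ i ∈ range l, f (i + 1) := by
  induction l with
  | zero => simp
  | succ n ih => rw [prod_Icc_succ_top (Nat.le_add_left 1 n), ih, prod_range_succ]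

lemma key_s12 {F : Type*} [Field F] [CharZero F] (h b m₁ m₂ : F) (hh : h ≠ 0)
    (hb : ∀ i : ℕ, b + h * ((i : F) + 1) ≠ 0) (l : ℕ) :
    (∏ i ∈ range l, ((m₁ + 2*h*i) * (m₂ + 2*h*i))) /
      (∏ i ∈ Icc 1 l, ((2*b + 2*h*i) * (2*h*i))) =
    hypCoeff F (m₁/(2*h)) (m₂/(2*h)) (1 + b/h) l := by
  have h2 : (2 : F) * h ≠ 0 := mul_ne_zero two_ne_zero hh
  have hCfac : ∀ i : ℕ, (1 + b/h + (i:F)) ≠ 0 := by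
    intro i hz
    apply hb i
    have : b + h * ((i:F) + 1) = h * (1 + b/h + i) := by field_simp; ring
    rw [this, hz, mul_zero]
  have hnat : ∀ i : ℕ, ((i : F) + 1) ≠ 0 := by
    intro i
    have : ((i : F) + 1) = ((i + 1 : ℕ) : F) := by push_cast; ring
    rw [this]
    exact Nat.cast_ne_zero.mpr (Nat.succ_ne_zero i)
  rw [hypCoeff, asc_eval_prod, asc_eval_prod, asc_eval_prod, prod_Icc_one]
  rw [← prod_range_add_one_eq_factorial l, Nat.cast_prod]
  have hcast : ∀ i ∈ range l, ((i + 1 : ℕ) : F) = (i : F) + 1 := by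
    intro i _; push_cast; ring
  rw [prod_congr rfl hcast]
  rw [← prod_mul_distrib, ← prod_mul_distrib]
  have hL : (∏ i ∈ range l, ((2*b + 2*h*((i:ℕ) + 1 : ℕ)) * (2*h*((i:ℕ) + 1 : ℕ)))) ≠ 0 := by
    apply prod_ne_zero_iff.mpr
    intro i _
    apply mul_ne_zero
    · intro hz
      apply hb i
      push_cast at hz
      linear_combination hz / 2
    · apply mul_ne_zero h2
      rw [show (((i:ℕ) + 1 : ℕ) : F) = (i:F) + 1 by push_cast; ring]
      exact hnat i
  have hR : (∏ i ∈ range l, ((1 + b/h + (i:F)) * ((i:F) + 1))) ≠ 0 :=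
    prod_ne_zero_iff.mpr fun i _ => mul_ne_zero (hCfac i) (hnat i)
  rw [div_eq_div_iff hL hR, ← prod_mul_distrib, ← prod_mul_distrib]
  apply prod_congr rfl
  intro i _
  push_cast
  field_simp
  ring

lemma mul_apply_sep {F : Type*} [Field F] (f g : MvPowerSeries (Fin 2) F)
    (hf : ∀ x : Fin 2 →₀ ℕ, x 1 ≠ 0 → f x = 0)
    (hg : ∀ y : Fin 2 →₀ ℕ, y 0 ≠ 0 → g y = 0) (e : Fin 2 →₀ ℕ) :
    (f * g) e = f (Finsupp.single 0 (e 0)) * g (Finsupp.single 1 (e 1)) := by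
  classical
  have h1 : (f * g) e = MvPowerSeries.coeff e (f * g) := rfl
  rw [h1, MvPowerSeries.coeff_mul,
    Finset.sum_eq_single (Finsupp.single 0 (e 0), Finsupp.single 1 (e 1))]
  · rfl
  · rintro ⟨x, y⟩ hxy hne
    rw [Finset.HasAntidiagonal.mem_antidiagonal] at hxy
    by_cases hx : x 1 = 0
    · by_cases hy : y 0 = 0
      · exfalso
        apply hne
        have h0 : x 0 = e 0 := by
          have := congrArg (fun z => z 0) hxy
          simpa [hy] using this
        have h1' : y 1 = e 1 := by
          have := congrArg (fun z => z 1) hxy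
          simpa [hx] using this
        have hx' : x = Finsupp.single 0 (e 0) := by
          ext i
          fin_cases i <;> simp [h0, hx, Finsupp.single_apply]
        have hy' : y = Finsupp.single 1 (e 1) := by
          ext i
          fin_cases i <;> simp [h1', hy, Finsupp.single_apply]
        simp [hx', hy']
      · have : (MvPowerSeries.coeff y) g = 0 := hg y hy
        simp [this]
    · have : (MvPowerSeries.coeff x) f = 0 := hf x hx
      simp [this]
  · intro hmem
    exfalso
    apply hmem
    rw [Finset.HasAntidiagonal.mem_antidiagonal]
    ext i
    fin_cases i <;> simp [Finsupp.single_apply]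

/-- The even–even sector of the SU(2) ℤ₂-orbifold vortex partition function (discrete
charge `q_{1,2}=0`, fundamental charges `(0,1)`) equals the differential operator
`1 + (h/(2a))(z₂∂_{z₂} − z₁∂_{z₁})` acting on a product of two Gauss hypergeometric
functions. -/
theorem orbifold_vortex_even_even (F : Type*) [Field F] [CharZero F]
    (a h m₁₁ m₁₂ m₂₁ m₂₂ : F) (ha : 2 * a ≠ 0) (hh : h ≠ 0)
    (haZ : ∀ n : ℤ, a / h ≠ (n : F)) :
    (fun e : Fin 2 →₀ ℕ =>
        if 2 ∣ e 0 ∧ 2 ∣ e 1 then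
          ((2 * a + 2 * h * ((e 1 / 2 : ℕ) - (e 0 / 2 : ℕ) : F)) / (2 * a)) *
            (-1 : F) ^ (e 0 / 2 + e 1 / 2) *
            ((∏ i ∈ Finset.range (e 0 / 2), ((m₁₁ + 2 * h * i) * (m₁₂ + 2 * h * i))) /
              (∏ i ∈ Finset.Icc 1 (e 0 / 2), ((-(2 * a) + 2 * h * i) * (2 * h * i)))) *
            ((∏ i ∈ Finset.range (e 1 / 2), ((m₂₁ + 2 * h * i) * (m₂₂ + 2 * h * i))) /
              (∏ i ∈ Finset.Icc 1 (e 1 / 2), ((2 * a + 2 * h * i) * (2 * h * i))))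
        else 0 : MvPowerSeries (Fin 2) F) =
      (hypSq F (m₁₁ / (2 * h)) (m₁₂ / (2 * h)) (1 - a / h) 0 *
          hypSq F (m₂₁ / (2 * h)) (m₂₂ / (2 * h)) (1 + a / h) 1) +
        (MvPowerSeries.C (σ := Fin 2) (R := F)) (h / (2 * a)) *
          (eulerOp F 1 (hypSq F (m₁₁ / (2 * h)) (m₁₂ / (2 * h)) (1 - a / h) 0 *
              hypSq F (m₂₁ / (2 * h)) (m₂₂ / (2 * h)) (1 + a / h) 1) -
            eulerOp F 0 (hypSq F (m₁₁ / (2 * h)) (m₁₂ / (2 * h)) (1 - a / h) 0 *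
              hypSq F (m₂₁ / (2 * h)) (m₂₂ / (2 * h)) (1 + a / h) 1)) := by
  classical
  set A := hypSq F (m₁₁ / (2 * h)) (m₁₂ / (2 * h)) (1 - a / h) 0 with hA
  set B := hypSq F (m₂₁ / (2 * h)) (m₂₂ / (2 * h)) (1 + a / h) 1 with hB
  funext e
  have hAsupp : ∀ x : Fin 2 →₀ ℕ, x 1 ≠ 0 → A x = 0 := by
    intro x hx
    simp [hA, hypSq, hx]
  have hBsupp : ∀ y : Fin 2 →₀ ℕ, y 0 ≠ 0 → B y = 0 := by
    intro y hy
    simp [hB, hypSq, hy]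
  have hprod : ∀ n : Fin 2 →₀ ℕ,
      (A * B) n = A (Finsupp.single 0 (n 0)) * B (Finsupp.single 1 (n 1)) :=
    fun n => mul_apply_sep A B hAsupp hBsupp n
  have hAval : ∀ n : ℕ, A (Finsupp.single 0 n) =
      if 2 ∣ n then (-1 : F) ^ (n / 2) *
        hypCoeff F (m₁₁ / (2 * h)) (m₁₂ / (2 * h)) (1 - a / h) (n / 2) else 0 := by
    intro n
    simp [hA, hypSq, Finsupp.single_apply]
  have hBval : ∀ n : ℕ, B (Finsupp.single 1 n) =
      if 2 ∣ n then (-1 : F) ^ (n / 2) *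
        hypCoeff F (m₂₁ / (2 * h)) (m₂₂ / (2 * h)) (1 + a / h) (n / 2) else 0 := by
    intro n
    simp [hB, hypSq, Finsupp.single_apply]
  have hRHS : (A * B +
      (MvPowerSeries.C (σ := Fin 2) (R := F)) (h / (2 * a)) *
        (eulerOp F 1 (A * B) - eulerOp F 0 (A * B))) e =
      (A * B) e + (h / (2 * a)) * ((e 1 : F) * (A * B) e - (e 0 : F) * (A * B) e) := by
    have hC : ((MvPowerSeries.C (σ := Fin 2) (R := F)) (h / (2 * a)) *
        (eulerOp F 1 (A * B) - eulerOp F 0 (A * B))) e =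
        (h / (2 * a)) * ((eulerOp F 1 (A * B) - eulerOp F 0 (A * B)) e) :=
      MvPowerSeries.coeff_C_mul e _ _
    show (A * B) e + _ = _
    rw [hC]
    rfl
  rw [hRHS, hprod e, hAval, hBval]
  by_cases hdvd : 2 ∣ e 0 ∧ 2 ∣ e 1
  · obtain ⟨h0, h1⟩ := hdvd
    rw [if_pos ⟨h0, h1⟩, if_pos h0, if_pos h1]
    set l₁ := e 0 / 2 with hl₁
    set l₂ := e 1 / 2 with hl₂
    have he0 : (e 0 : F) = 2 * (l₁ : F) := by
      have : l₁ * 2 = e 0 := Nat.div_mul_cancel h0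
      rw [← this]; push_cast; ring
    have he1 : (e 1 : F) = 2 * (l₂ : F) := by
      have : l₂ * 2 = e 1 := Nat.div_mul_cancel h1
      rw [← this]; push_cast; ring
    have k1 : (∏ i ∈ Finset.range l₁, ((m₁₁ + 2 * h * i) * (m₁₂ + 2 * h * i))) /
        (∏ i ∈ Finset.Icc 1 l₁, ((-(2 * a) + 2 * h * i) * (2 * h * i))) =
        hypCoeff F (m₁₁ / (2 * h)) (m₁₂ / (2 * h)) (1 - a / h) l₁ := by
      have hb : ∀ i : ℕ, (-a) + h * ((i : F) + 1) ≠ 0 := by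
        intro i hz
        apply haZ ((i : ℤ) + 1)
        have ha' : a = h * ((i : F) + 1) := by linear_combination -hz
        rw [ha', mul_comm, mul_div_assoc, div_self hh, mul_one]
        push_cast; ring
      have := key_s12 h (-a) m₁₁ m₁₂ hh hb l₁
      rw [show (1 : F) + (-a) / h = 1 - a / h from by ring] at this
      rw [← this]
      congr 1
      exact prod_congr rfl fun i _ => by ring
    have k2 : (∏ i ∈ Finset.range l₂, ((m₂₁ + 2 * h * i) * (m₂₂ + 2 * h * i))) /
        (∏ i ∈ Finset.Icc 1 l₂, ((2 * a + 2 * h * i) * (2 * h * i))) =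
        hypCoeff F (m₂₁ / (2 * h)) (m₂₂ / (2 * h)) (1 + a / h) l₂ := by
      have hb : ∀ i : ℕ, a + h * ((i : F) + 1) ≠ 0 := by
        intro i hz
        apply haZ (-((i : ℤ) + 1))
        have ha' : a = -(h * ((i : F) + 1)) := by linear_combination hz
        rw [ha', neg_div, mul_comm, mul_div_assoc, div_self hh, mul_one]
        push_cast; ring
      have := key_s12 h a m₂₁ m₂₂ hh hb l₂
      rw [← this]
    rw [k1, k2, he0, he1]
    set c₁ := hypCoeff F (m₁₁ / (2 * h)) (m₁₂ / (2 * h)) (1 - a / h) l₁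
    set c₂ := hypCoeff F (m₂₁ / (2 * h)) (m₂₂ / (2 * h)) (1 + a / h) l₂
    rw [pow_add]
    have ha0 : a ≠ 0 := right_ne_zero_of_mul ha
    field_simp
  · rw [if_neg hdvd]
    rw [Decidable.not_and_iff_or_not] at hdvd
    rcases hdvd with hd | hd
    · rw [if_neg hd]; simp
    · rw [if_neg hd]; simp
end
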